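/- Let G be the vertex-amalgamation of n ≥ 2 odd cycles C_{c_1},…,C_{c_n} (each c_i odd, c_i ≥ 3) at one vertex. Then dim(G) = n. -/

import Mathlib

open SimpleGraph
open scoped Fin.CommRing

def resolves {V : Type*} (G : SimpleGraph V) (W : Finset V) : Prop :=
  ∀ u v : V, (∀ w ∈ W, G.dist u w = G.dist v w) → u = v

noncomputable def metricDim {V : Type*} [Fintype V] (G : SimpleGraph V) : ℕ :=
  sInf {k | ∃ W : Finset V, resolves G W ∧ W.card = k}

def IsVertexAmalMap {ι V : Type*} {Vi : ι → Type*}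
    (Gs : ∀ i, SimpleGraph (Vi i)) (v0 : ∀ i, Vi i)
    (G : SimpleGraph V) (v : V) (f : ∀ i, Vi i → V) : Prop :=
  (∀ i, Function.Injective (f i)) ∧
  (∀ i, f i (v0 i) = v) ∧
  (∀ i x y, G.Adj (f i x) (f i y) ↔ (Gs i).Adj x y) ∧
  (∀ i j x y, i ≠ j → f i x = f j y → f i x = v) ∧
  (∀ a : V, ∃ i x, f i x = a) ∧
  (∀ a b : V, G.Adj a b → ∃ i x y, f i x = a ∧ f i y = b)

def IsVertexAmal {ι V : Type*} {Vi : ι → Type*}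
    (Gs : ∀ i, SimpleGraph (Vi i)) (v0 : ∀ i, Vi i)
    (G : SimpleGraph V) (v : V) : Prop :=
  ∃ f, IsVertexAmalMap Gs v0 G v f

def IsEdgeAmalMap {ι V : Type*} {Vi : ι → Type*}
    (Gs : ∀ i, SimpleGraph (Vi i)) (u0 w0 : ∀ i, Vi i)
    (G : SimpleGraph V) (u w : V) (f : ∀ i, Vi i → V) : Prop :=
  (∀ i, (Gs i).Adj (u0 i) (w0 i)) ∧
  (∀ i, Function.Injective (f i)) ∧
  (∀ i, f i (u0 i) = u) ∧
  (∀ i, f i (w0 i) = w) ∧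
  (∀ i x y, G.Adj (f i x) (f i y) ↔ (Gs i).Adj x y) ∧
  (∀ i j x y, i ≠ j → f i x = f j y → f i x = u ∨ f i x = w) ∧
  (∀ a : V, ∃ i x, f i x = a) ∧
  (∀ a b : V, G.Adj a b → ∃ i x y, f i x = a ∧ f i y = b)

def IsEdgeAmal {ι V : Type*} {Vi : ι → Type*}
    (Gs : ∀ i, SimpleGraph (Vi i)) (u0 w0 : ∀ i, Vi i)
    (G : SimpleGraph V) (u w : V) : Prop :=
  ∃ f, IsEdgeAmalMap Gs u0 w0 G u w f

section AuxLemmas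

open SimpleGraph

lemma fin_sub_val (m : ℕ) (a b : Fin m) : (a - b).val = (a.val + (m - b.val)) % m := by
  rw [Fin.sub_def]; simp [Nat.add_comm]

lemma cg_connected {m : ℕ} (hm : 1 ≤ m) : (cycleGraph m).Connected := by
  have := cycleGraph_connected (n := m - 1)
  rwa [Nat.sub_add_cancel hm] at this

lemma step_lemma {m : ℕ} [NeZero m] (hm : 2 ≤ m) (w : Fin m) :
    min w.val (-w).val ≤ min (w - 1).val ((1 : Fin m) - w).val + 1 := by
  have hv1 : (1 : Fin m).val = 1 := by
    rw [Fin.val_one']; exact Nat.mod_eq_of_lt (by omega)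
  have hp := w.isLt
  have hneg : (-w).val = (m - w.val) % m := rfl
  have h1 : (w - 1).val = (w.val + (m - 1)) % m := by rw [fin_sub_val, hv1]
  have h2 : ((1:Fin m) - w).val = (1 + (m - w.val)) % m := by rw [fin_sub_val, hv1]
  rcases Nat.eq_zero_or_pos w.val with h0 | h0
  · simp [hneg, h0, Nat.mod_self]
  rcases eq_or_lt_of_le (Nat.succ_le_of_lt h0) with h1' | h1'
  · -- w.val = 1
    have e1 : (w - 1).val = 0 := by
      rw [h1, ← h1']
      have : 1 + (m - 1) = m := by omega
      rw [this, Nat.mod_self]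
    rw [e1]
    have : min w.val (-w).val ≤ 1 := le_trans (min_le_left _ _) (by omega)
    omega
  · -- w.val ≥ 2
    have e1 : (w - 1).val = w.val - 1 := by
      have hr : w.val + (m - 1) = m + (w.val - 1) := by omega
      rw [h1, hr, Nat.add_mod_left, Nat.mod_eq_of_lt (by omega)]
    have e2 : ((1:Fin m) - w).val = m - w.val + 1 := by
      rw [h2, Nat.mod_eq_of_lt (by omega)]; omega
    have e3 : (-w).val = m - w.val := by rw [hneg, Nat.mod_eq_of_lt (by omega)]
    rw [e1, e2, e3]; omega

lemma cycle_dist {m : ℕ} (hm : 2 ≤ m) (a b : Fin m) :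
    (cycleGraph m).dist a b = min (b - a).val (a - b).val := by
  haveI : NeZero m := ⟨by omega⟩
  have hconn := cg_connected (by omega : 1 ≤ m)
  have hv1 : (1 : Fin m).val = 1 := by
    rw [Fin.val_one']; exact Nat.mod_eq_of_lt (by omega)
  have hup : ∀ (d : ℕ) (a : Fin m), (cycleGraph m).dist a (a + (d : Fin m)) ≤ d := by
    intro d
    induction d with
    | zero => intro a; simp
    | succ d ih =>
      intro a
      have hcast : ((d+1 : ℕ) : Fin m) = (d : Fin m) + 1 := by push_cast; ring
      rw [hcast]
      have hadj : (cycleGraph m).Adj (a + (d : Fin m)) (a + ((d:Fin m) + 1)) := by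
        rw [cycleGraph_adj']
        right
        have : a + ((d:Fin m) + 1) - (a + (d:Fin m)) = 1 := by ring
        rw [this, hv1]
      have hd1 : (cycleGraph m).dist (a + (d:Fin m)) (a + ((d:Fin m)+1)) ≤ 1 := by
        have := dist_le (Walk.cons hadj Walk.nil)
        simpa using this
      calc (cycleGraph m).dist a (a + ((d:Fin m)+1))
          ≤ (cycleGraph m).dist a (a + (d:Fin m)) + (cycleGraph m).dist (a + (d:Fin m)) (a + ((d:Fin m)+1)) := hconn.dist_triangle
        _ ≤ d + 1 := by have := ih a; omega
  have hlow : ∀ (a b : Fin m) (p : (cycleGraph m).Walk a b), min (b - a).val (a - b).val ≤ p.length := by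
    intro a b p
    induction p with
    | nil => simp
    | @cons a c b h q ih =>
      rw [cycleGraph_adj'] at h
      rcases h with h | h
      · have hac : a - c = 1 := Fin.ext (by rw [h, hv1])
        have h1 : b - a = (b - c) - 1 := by rw [← hac]; ring
        have h2 : a - b = (1 : Fin m) - (b - c) := by rw [← hac]; ring
        rw [h1, h2, Walk.length_cons]
        have hst := step_lemma hm ((1 : Fin m) - (b - c))
        have e1 : -((1:Fin m) - (b - c)) = (b - c) - 1 := by ring
        have e2 : ((1:Fin m) - (b - c)) - 1 = c - b := by ring
        have e3 : (1:Fin m) - ((1:Fin m) - (b - c)) = b - c := by ring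
        rw [e1, e2, e3] at hst
        omega
      · have hca : c - a = 1 := Fin.ext (by rw [h, hv1])
        have h1 : b - c = (b - a) - 1 := by rw [← hca]; ring
        have h2 : c - b = (1 : Fin m) - (b - a) := by rw [← hca]; ring
        rw [h1, h2] at ih
        rw [Walk.length_cons]
        have hst := step_lemma hm (b - a)
        have hab : -(b - a) = a - b := by ring
        rw [hab] at hst
        omega
  apply le_antisymm
  · apply le_min
    · have heq : a + ((b - a).val : Fin m) = b := by
        rw [Fin.cast_val_eq_self]; ring
      have hu := hup (b - a).val a
      rwa [heq] at hu
    · have heq : b + ((a - b).val : Fin m) = a := by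
        rw [Fin.cast_val_eq_self]; ring
      have hu := hup (a - b).val b
      rw [heq] at hu
      rwa [SimpleGraph.dist_comm] at hu
  · obtain ⟨p, hp⟩ := hconn.exists_walk_length_eq_dist a b
    rw [← hp]
    exact hlow a b p

lemma dist_to_base {m k : ℕ} [NeZero m] (hm : m = 2*k+1) (hk : 1 ≤ k) (t x : Fin m) :
    (cycleGraph m).dist x t = min (x - t).val (m - (x - t).val) := by
  haveI : NeZero m := ⟨by omega⟩
  have hm2 : 2 ≤ m := by omega
  rw [cycle_dist hm2]
  have htx : t - x = -(x - t) := by ring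
  rw [htx]
  have hp := (x - t).isLt
  have hneg : (-(x - t)).val = (m - (x - t).val) % m := rfl
  rcases Nat.eq_zero_or_pos (x - t).val with h0 | h0
  · rw [hneg, h0]; simp
  · rw [hneg, Nat.mod_eq_of_lt (by omega)]; exact Nat.min_comm _ _

lemma dist_to_A {m k : ℕ} [NeZero m] (hm : m = 2*k+1) (hk : 1 ≤ k) (t x : Fin m) :
    (cycleGraph m).dist x (t + ((k:ℕ) : Fin m)) =
      (if (x - t).val ≤ k then k - (x - t).val else (x - t).val - k) := by
  haveI : NeZero m := ⟨by omega⟩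
  have hp : (x - t).val < m := (x - t).isLt
  have hkv : (((k:ℕ) : Fin m)).val = k := by
    rw [Fin.val_natCast]; exact Nat.mod_eq_of_lt (by omega)
  have hAx : (t + ((k:ℕ):Fin m)) - x = ((k:ℕ) : Fin m) - (x - t) := by ring
  have hxA : x - (t + ((k:ℕ):Fin m)) = (x - t) - ((k:ℕ) : Fin m) := by ring
  have e1' := fin_sub_val m (((k:ℕ)) : Fin m) (x - t)
  have e2' := fin_sub_val m (x - t) (((k:ℕ)) : Fin m)
  rw [hkv] at e1' e2'
  have hm2 : 2 ≤ m := by omega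
  rw [cycle_dist hm2, hAx, hxA, e1', e2']
  set p := (x - t).val with hpdef
  by_cases hpk : p ≤ k
  · rw [if_pos hpk]
    have e1 : (k + (m - p)) % m = k - p := by
      have h : k + (m - p) = m + (k - p) := by omega
      rw [h, Nat.add_mod_left, Nat.mod_eq_of_lt (by omega)]
    rcases eq_or_lt_of_le hpk with he | hlt
    · have e2 : (p + (m - k)) % m = 0 := by
        have h : p + (m - k) = m := by omega
        rw [h, Nat.mod_self]
      rw [e1, e2]; omega
    · have e2 : (p + (m - k)) % m = p + k + 1 := by
        rw [Nat.mod_eq_of_lt (by omega)]; omega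
      rw [e1, e2]; omega
  · rw [if_neg hpk]
    have e1 : (k + (m - p)) % m = k + m - p := by
      rw [Nat.mod_eq_of_lt (by omega)]; omega
    have e2 : (p + (m - k)) % m = p - k := by
      have h : p + (m - k) = m + (p - k) := by omega
      rw [h, Nat.add_mod_left, Nat.mod_eq_of_lt (by omega)]
    rw [e1, e2]; omega

lemma cycle_diam {m k : ℕ} [NeZero m] (hm : m = 2*k+1) (hk : 1 ≤ k) (x y : Fin m) :
    (cycleGraph m).dist x y ≤ k := by
  haveI : NeZero m := ⟨by omega⟩
  have hm2 : 2 ≤ m := by omega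
  rw [cycle_dist hm2]
  have h1 := (y - x).isLt
  have hxy : x - y = -(y - x) := by ring
  rw [hxy]
  have hneg : (-(y - x)).val = (m - (y - x).val) % m := rfl
  rcases Nat.eq_zero_or_pos (y - x).val with h0 | h0
  · rw [hneg, h0]; simp
  · rw [hneg, Nat.mod_eq_of_lt (by omega)]; omega

lemma cycle_unique {m k : ℕ} [NeZero m] (hm : m = 2*k+1) (hk : 1 ≤ k) (t x y : Fin m)
    (h1 : (cycleGraph m).dist x t = (cycleGraph m).dist y t)
    (h2 : (cycleGraph m).dist x (t + ((k:ℕ) : Fin m)) =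
          (cycleGraph m).dist y (t + ((k:ℕ) : Fin m))) : x = y := by
  rw [dist_to_base hm hk, dist_to_base hm hk] at h1
  rw [dist_to_A hm hk, dist_to_A hm hk] at h2
  have hp : (x - t).val < m := (x - t).isLt
  have hq : (y - t).val < m := (y - t).isLt
  have hval : (x - t).val = (y - t).val := by
    split_ifs at h2 <;> omega
  have hsub : x - t = y - t := Fin.ext hval
  exact sub_left_inj.mp hsub

lemma dist_A_base {m k : ℕ} [NeZero m] (hm : m = 2*k+1) (hk : 1 ≤ k) (t : Fin m) :
    (cycleGraph m).dist (t + ((k:ℕ) : Fin m)) t = k := by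
  haveI : NeZero m := ⟨by omega⟩
  rw [dist_to_base hm hk]
  have e : (t + ((k:ℕ):Fin m)) - t = ((k:ℕ) : Fin m) := by ring
  rw [e, Fin.val_natCast, Nat.mod_eq_of_lt (by omega)]
  omega

lemma dist_B_base {m k : ℕ} [NeZero m] (hm : m = 2*k+1) (hk : 1 ≤ k) (t : Fin m) :
    (cycleGraph m).dist (t + ((k+1:ℕ) : Fin m)) t = k := by
  haveI : NeZero m := ⟨by omega⟩
  rw [dist_to_base hm hk]
  have e : (t + ((k+1:ℕ):Fin m)) - t = ((k+1:ℕ) : Fin m) := by ring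
  rw [e, Fin.val_natCast, Nat.mod_eq_of_lt (by omega)]
  omega

lemma AB_adj {m k : ℕ} [NeZero m] (hm : m = 2*k+1) (hk : 1 ≤ k) (t : Fin m) :
    (cycleGraph m).Adj (t + ((k:ℕ) : Fin m)) (t + ((k+1:ℕ) : Fin m)) := by
  haveI : NeZero m := ⟨by omega⟩
  rw [cycleGraph_adj']
  right
  have e : (t + ((k+1:ℕ):Fin m)) - (t + ((k:ℕ):Fin m)) = ((k+1:ℕ):Fin m) - ((k:ℕ):Fin m) := by ring
  have e2 : ((k+1:ℕ):Fin m) - ((k:ℕ):Fin m) = 1 := by push_cast; ring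
  rw [e, e2, Fin.val_one']
  exact Nat.mod_eq_of_lt (by omega)

lemma A_ne_base {m k : ℕ} [NeZero m] (hm : m = 2*k+1) (hk : 1 ≤ k) (t : Fin m) :
    t + ((k:ℕ) : Fin m) ≠ t := by
  intro h
  rw [add_eq_left] at h
  have hv := congrArg Fin.val h
  rw [Fin.val_natCast, Nat.mod_eq_of_lt (by omega), Fin.val_zero] at hv
  omega

lemma B_ne_base {m k : ℕ} [NeZero m] (hm : m = 2*k+1) (hk : 1 ≤ k) (t : Fin m) :
    t + ((k+1:ℕ) : Fin m) ≠ t := by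
  intro h
  rw [add_eq_left] at h
  have hv := congrArg Fin.val h
  rw [Fin.val_natCast, Nat.mod_eq_of_lt (by omega), Fin.val_zero] at hv
  omega

end AuxLemmas

theorem stmt15 {V : Type*} [Fintype V] (n : ℕ) (hn : 2 ≤ n) (c : Fin n → ℕ)
    (hc3 : ∀ i, 3 ≤ c i) (hodd : ∀ i, Odd (c i))
    (v0 : ∀ i, Fin (c i)) (G : SimpleGraph V) (v : V)
    (h : IsVertexAmal (fun i => SimpleGraph.cycleGraph (c i)) v0 G v) :
    metricDim G = n := by
  classical
  obtain ⟨f, hinj, hfv0, hadj, hsep, hsurj, hedge⟩ := h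
  have hex : ∀ i, ∃ ki, c i = 2*ki+1 ∧ 1 ≤ ki := by
    intro i
    obtain ⟨r, hr⟩ := hodd i
    exact ⟨r, by omega, by have := hc3 i; omega⟩
  choose k hck hk1 using hex
  haveI instNZ : ∀ i, NeZero (c i) := fun i => ⟨by have := hc3 i; omega⟩
  let hom : ∀ i, cycleGraph (c i) →g G := fun i => ⟨f i, fun {a b} hab => (hadj i a b).mpr hab⟩
  have hconn_i : ∀ i, (cycleGraph (c i)).Connected :=
    fun i => cg_connected (by have := hc3 i; omega)
  have hreach_v : ∀ i x, G.Reachable (f i x) v := by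
    intro i x
    have h2 : G.Reachable (f i x) (f i (v0 i)) := ((hconn_i i) x (v0 i)).map (hom i)
    rwa [hfv0 i] at h2
  have hGconn : G.Connected := by
    rw [connected_iff]
    refine ⟨fun a b => ?_, ⟨v⟩⟩
    obtain ⟨i, x, rfl⟩ := hsurj a
    obtain ⟨j, y, rfl⟩ := hsurj b
    exact (hreach_v i x).trans (hreach_v j y).symm
  -- retraction bound
  have H1 : ∀ i (x y : Fin (c i)) (p : G.Walk (f i x) (f i y)),
      (cycleGraph (c i)).dist x y ≤ p.length := by
    intro i x y p
    let r : V → Fin (c i) := fun a => if h : ∃ z, f i z = a then h.choose else v0 i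
    have hr1 : ∀ z, r (f i z) = z := by
      intro z
      have hz : ∃ w, f i w = f i z := ⟨z, rfl⟩
      simp only [r, dif_pos hz]
      exact hinj i hz.choose_spec
    have hrv : r v = v0 i := by rw [← hfv0 i, hr1]
    have hout : ∀ (j : Fin n) (x' : Fin (c j)), j ≠ i → r (f j x') = v0 i := by
      intro j x' hji
      by_cases hx : ∃ z, f i z = f j x'
      · obtain ⟨z, hz⟩ := hx
        have h1 : f i z = v := hsep i j z x' (fun he => hji he.symm) hz
        have h2 : f j x' = v := hz.symm.trans h1
        rw [h2, hrv]
      · simp only [r, dif_neg hx]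
    have hr2 : ∀ a b : V, G.Adj a b → (cycleGraph (c i)).dist (r a) (r b) ≤ 1 := by
      intro a b hab
      obtain ⟨j, x', y', hx', hy'⟩ := hedge a b hab
      subst hx'; subst hy'
      have hadj' : (cycleGraph (c j)).Adj x' y' := (hadj j x' y').mp hab
      by_cases hji : j = i
      · subst hji
        have hle := dist_le (Walk.cons hadj' Walk.nil)
        simpa [hr1] using hle
      · rw [hout j x' hji, hout j y' hji, SimpleGraph.dist_self]
        omega
    have hr3 : ∀ (a b : V) (p : G.Walk a b), (cycleGraph (c i)).dist (r a) (r b) ≤ p.length := by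
      intro a b p
      induction p with
      | nil => simp
      | @cons a c' b hab q ih =>
        calc (cycleGraph (c i)).dist (r a) (r b)
            ≤ (cycleGraph (c i)).dist (r a) (r c') + (cycleGraph (c i)).dist (r c') (r b) :=
              (hconn_i i).dist_triangle
          _ ≤ 1 + q.length := add_le_add (hr2 _ _ hab) ih
          _ = (Walk.cons hab q).length := by rw [Walk.length_cons]; omega
    have hfin := hr3 _ _ p
    simpa [hr1] using hfin
  -- same-cycle distance
  have H2 : ∀ i x y, G.dist (f i x) (f i y) = (cycleGraph (c i)).dist x y := by
    intro i x y
    apply le_antisymm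
    · obtain ⟨p, hp⟩ := (hconn_i i).exists_walk_length_eq_dist x y
      have hle : G.dist (f i x) (f i y) ≤ (p.map (hom i)).length := dist_le (p.map (hom i))
      rwa [Walk.length_map, hp] at hle
    · obtain ⟨p, hp⟩ := hGconn.exists_walk_length_eq_dist (f i x) (f i y)
      rw [← hp]; exact H1 i x y p
  -- separation
  have H3 : ∀ (i : Fin n) (a b : V) (p : G.Walk a b),
      (∃ x, f i x = a) → ¬(∃ y, f i y = b) → v ∈ p.support := by
    intro i a b p
    induction p with
    | nil => intro h1 h2; exact absurd h1 h2
    | @cons a c' b hab q ih =>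
      intro h1 h2
      by_cases hc' : ∃ z, f i z = c'
      · rw [Walk.support_cons]
        exact List.mem_cons_of_mem _ (ih hc' h2)
      · obtain ⟨x, hx⟩ := h1
        obtain ⟨j, x', y', hx', hy'⟩ := hedge a c' hab
        have hji : j ≠ i := by rintro rfl; exact hc' ⟨y', hy'⟩
        have hav : a = v := by
          have h1' : f i x = v := hsep i j x x' (fun he => hji he.symm) (by rw [hx, ← hx'])
          rw [← hx, h1']
        rw [Walk.support_cons, hav]
        exact List.mem_cons_self
  -- cross distance
  have H4 : ∀ i j, i ≠ j → ∀ (x : Fin (c i)) (y : Fin (c j)), G.dist (f i x) (f j y)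
      = (cycleGraph (c i)).dist x (v0 i) + (cycleGraph (c j)).dist (v0 j) y := by
    intro i j hij x y
    have hd1 : G.dist (f i x) v = (cycleGraph (c i)).dist x (v0 i) := by
      rw [← hfv0 i, H2]
    have hd2 : G.dist v (f j y) = (cycleGraph (c j)).dist (v0 j) y := by
      rw [← hfv0 j, H2]
    by_cases hy : y = v0 j
    · subst hy
      rw [hfv0 j, hd1, SimpleGraph.dist_self, add_zero]
    · have hnot : ¬ ∃ z, f i z = f j y := by
        rintro ⟨z, hz⟩
        have h1 : f i z = v := hsep i j z y hij hz
        have h2 : f j y = f j (v0 j) := by rw [← hz, h1, hfv0 j]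
        exact hy (hinj j h2)
      apply le_antisymm
      · calc G.dist (f i x) (f j y) ≤ G.dist (f i x) v + G.dist v (f j y) := hGconn.dist_triangle
          _ = _ := by rw [hd1, hd2]
      · obtain ⟨p, hp⟩ := hGconn.exists_walk_length_eq_dist (f i x) (f j y)
        have hvmem : v ∈ p.support := H3 i _ _ p ⟨x, rfl⟩ hnot
        have hlen : (p.takeUntil v hvmem).length + (p.dropUntil v hvmem).length = p.length := by
          rw [← Walk.length_append, p.take_spec hvmem]
        have d1 := dist_le (p.takeUntil v hvmem)
        have d2 := dist_le (p.dropUntil v hvmem)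
        rw [hd1] at d1
        rw [hd2] at d2
        omega
  -- antipodal vertices
  set A : ∀ i, Fin (c i) := fun i => v0 i + ((k i : ℕ) : Fin (c i)) with hA
  set B : ∀ i, Fin (c i) := fun i => v0 i + ((k i + 1 : ℕ) : Fin (c i)) with hB
  have hdA : ∀ i, (cycleGraph (c i)).dist (A i) (v0 i) = k i :=
    fun i => dist_A_base (hck i) (hk1 i) (v0 i)
  have hdB : ∀ i, (cycleGraph (c i)).dist (B i) (v0 i) = k i :=
    fun i => dist_B_base (hck i) (hk1 i) (v0 i)
  have hAne : ∀ i, A i ≠ v0 i := fun i => A_ne_base (hck i) (hk1 i) (v0 i)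
  have hABne : ∀ i, A i ≠ B i := fun i => (AB_adj (hck i) (hk1 i) (v0 i)).ne
  -- the resolving set
  set W : Finset V := Finset.image (fun i => f i (A i)) Finset.univ with hW
  have hWl : ∀ l, f l (A l) ∈ W := fun l => Finset.mem_image_of_mem _ (Finset.mem_univ l)
  have hres : resolves G W := by
    intro u u' hd
    obtain ⟨i, x, rfl⟩ := hsurj u
    obtain ⟨j, y, rfl⟩ := hsurj u'
    by_cases hij : i = j
    · subst hij
      haveI : Nontrivial (Fin n) :=
        ⟨⟨⟨0, by omega⟩, ⟨1, by omega⟩, Fin.ne_of_val_ne (by simp)⟩⟩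
      obtain ⟨l, hl⟩ := exists_ne i
      have e1 := hd (f l (A l)) (hWl l)
      rw [H4 i l (fun he => hl he.symm) x (A l), H4 i l (fun he => hl he.symm) y (A l)] at e1
      have e1' : (cycleGraph (c i)).dist x (v0 i) = (cycleGraph (c i)).dist y (v0 i) := by omega
      have e2 := hd (f i (A i)) (hWl i)
      rw [H2, H2] at e2
      have hxy := cycle_unique (hck i) (hk1 i) (v0 i) x y e1' e2
      rw [hxy]
    · have e1 := hd (f i (A i)) (hWl i)
      have e2 := hd (f j (A j)) (hWl j)
      rw [H2 i x (A i), H4 j i (fun he => hij he.symm) y (A i)] at e1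
      rw [H4 i j hij x (A j), H2 j y (A j)] at e2
      have hv0A : (cycleGraph (c i)).dist (v0 i) (A i) = k i := by
        rw [SimpleGraph.dist_comm]; exact hdA i
      have hv0A' : (cycleGraph (c j)).dist (v0 j) (A j) = k j := by
        rw [SimpleGraph.dist_comm]; exact hdA j
      have hdiam1 : (cycleGraph (c i)).dist x (A i) ≤ k i := cycle_diam (hck i) (hk1 i) x (A i)
      have hdiam2 : (cycleGraph (c j)).dist y (A j) ≤ k j := cycle_diam (hck j) (hk1 j) y (A j)
      rw [hv0A] at e1
      rw [hv0A'] at e2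
      have hyv : v0 j = y := by
        apply (hconn_i j).dist_eq_zero_iff.mp
        have hcm : (cycleGraph (c j)).dist (v0 j) y = (cycleGraph (c j)).dist y (v0 j) :=
          SimpleGraph.dist_comm
        omega
      have hxv : v0 i = x := by
        apply (hconn_i i).dist_eq_zero_iff.mp
        have : (cycleGraph (c i)).dist x (v0 i) = 0 := by omega
        rwa [SimpleGraph.dist_comm] at this
      rw [← hyv, ← hxv, hfv0 i, hfv0 j]
  have hWcard : W.card = n := by
    have hinjA : Function.Injective (fun i => f i (A i)) := by
      intro i j hij'
      by_contra hne
      have h1 := hsep i j (A i) (A j) hne hij'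
      have h2 : A i = v0 i := hinj i (by rw [h1, ← hfv0 i])
      exact hAne i h2
    rw [hW, Finset.card_image_of_injective _ hinjA, Finset.card_univ, Fintype.card_fin]
  -- lower bound
  have hlb : ∀ (W' : Finset V), resolves G W' → n ≤ W'.card := by
    intro W' hres'
    have hzex : ∀ i, ∃ z, f i z ∈ W' ∧ z ≠ v0 i := by
      intro i
      by_contra hno
      push_neg at hno
      have hne : f i (A i) ≠ f i (B i) := fun he => hABne i (hinj i he)
      apply hne
      apply hres'
      intro w hw
      obtain ⟨j, z, rfl⟩ := hsurj w
      by_cases hji : j = i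
      · subst hji
        have hz0 : z = v0 j := hno z hw
        subst hz0
        rw [H2, H2, hdA, hdB]
      · rw [H4 i j (fun he => hji he.symm) (A i) z,
           H4 i j (fun he => hji he.symm) (B i) z, hdA, hdB]
    choose z hzW hzne using hzex
    have hzinj : Function.Injective (fun i => f i (z i)) := by
      intro i j hij'
      by_contra hne
      have h1 := hsep i j (z i) (z j) hne hij'
      have h2 : z i = v0 i := hinj i (by rw [h1, ← hfv0 i])
      exact hzne i h2
    calc n = (Finset.univ : Finset (Fin n)).card := by simp
      _ ≤ W'.card := Finset.card_le_card_of_injOn (fun i => f i (z i))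
          (fun i _ => hzW i) hzinj.injOn
  have hmem : n ∈ {m | ∃ W : Finset V, resolves G W ∧ W.card = m} := ⟨W, hres, hWcard⟩
  apply le_antisymm
  · exact Nat.sInf_le hmem
  · have hmem2 := Nat.sInf_mem (s := {m | ∃ W : Finset V, resolves G W ∧ W.card = m}) ⟨n, hmem⟩
    obtain ⟨W', hres', hcard'⟩ := hmem2
    unfold metricDim
    rw [← hcard']
    exact hlb W' hres'
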